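/- arXiv:1812.01916 — 7 statements merged into one kernel-verified Lean document; each statement's English description precedes it below -/
import Mathlib

section
/- The Jacobson radical of the ring R equals the set J = {m(0,0,c,d) : c,d ∈ GF(2)}, a subset of R with exactly four elements. -/
open Matrix

/-- The matrix m(a,b,c,d) = [[a,c,d],[0,b,0],[0,0,b]] over GF(2). -/
def m (a b c d : ZMod 2) : Matrix (Fin 3) (Fin 3) (ZMod 2) :=
  !![a, c, d; 0, b, 0; 0, 0, b]

lemma m_mul (a b c d a' b' c' d' : ZMod 2) :
    m a b c d * m a' b' c' d' =
      m (a * a') (b * b') (a * c' + c * b') (a * d' + d * b') := by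
  ext i j
  fin_cases i <;> fin_cases j <;>
    simp [m, Matrix.mul_apply, Fin.sum_univ_three, Matrix.vecHead, Matrix.vecTail]

/-- The ring R, as a subring of the 3×3 matrices over GF(2). -/
def Rring : Subring (Matrix (Fin 3) (Fin 3) (ZMod 2)) where
  carrier := {A | ∃ a b c d : ZMod 2, A = m a b c d}
  zero_mem' := ⟨0, 0, 0, 0, by ext i j; fin_cases i <;> fin_cases j <;> simp [m, Matrix.vecHead, Matrix.vecTail]⟩
  one_mem' := ⟨1, 1, 0, 0, by ext i j; fin_cases i <;> fin_cases j <;> simp [m, Matrix.one_apply, Matrix.vecHead, Matrix.vecTail]⟩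
  add_mem' := by
    rintro A B ⟨a, b, c, d, rfl⟩ ⟨a', b', c', d', rfl⟩
    exact ⟨a + a', b + b', c + c', d + d',
      by ext i j; fin_cases i <;> fin_cases j <;> simp [m, Matrix.vecHead, Matrix.vecTail]⟩
  neg_mem' := by
    rintro A ⟨a, b, c, d, rfl⟩
    exact ⟨-a, -b, -c, -d,
      by ext i j; fin_cases i <;> fin_cases j <;> simp [m, Matrix.vecHead, Matrix.vecTail]⟩
  mul_mem' := by
    rintro A B ⟨a, b, c, d, rfl⟩ ⟨a', b', c', d', rfl⟩
    exact ⟨a * a', b * b', a * c' + c * b', a * d' + d * b', m_mul a b c d a' b' c' d'⟩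

lemma m_mem (a b c d : ZMod 2) : m a b c d ∈ Rring := ⟨a, b, c, d, rfl⟩

/-- The element m(a,b,c,d) viewed as an element of the ring R. -/
def mm (a b c d : ZMod 2) : Rring := ⟨m a b c d, m_mem a b c d⟩

/-- The set J = {m(0,0,c,d) : c,d ∈ GF(2)}, as a subset of R. -/
def Jset : Set Rring := {x | ∃ c d : ZMod 2, x = mm 0 0 c d}

lemma m_add (a b c d a' b' c' d' : ZMod 2) :
    m a b c d + m a' b' c' d' = m (a + a') (b + b') (c + c') (d + d') := by
  ext i j
  fin_cases i <;> fin_cases j <;> simp [m, Matrix.vecHead, Matrix.vecTail]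

lemma mm_mul (a b c d a' b' c' d' : ZMod 2) :
    mm a b c d * mm a' b' c' d' =
      mm (a * a') (b * b') (a * c' + c * b') (a * d' + d * b') :=
  Subtype.ext (m_mul a b c d a' b' c' d')

lemma mm_add (a b c d a' b' c' d' : ZMod 2) :
    mm a b c d + mm a' b' c' d' = mm (a + a') (b + b') (c + c') (d + d') :=
  Subtype.ext (m_add a b c d a' b' c' d')

lemma mm_one : (1 : Rring) = mm 1 1 0 0 := by
  apply Subtype.ext
  show (1 : Matrix (Fin 3) (Fin 3) (ZMod 2)) = m 1 1 0 0
  ext i j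
  fin_cases i <;> fin_cases j <;>
    simp [m, Matrix.one_apply, Matrix.vecHead, Matrix.vecTail]

lemma det_m (a b c d : ZMod 2) : (m a b c d).det = a * b * b := by
  simp [m, Matrix.det_fin_three, Matrix.vecHead, Matrix.vecTail]

/-- The Jacobson radical of R equals J, a subset of R with exactly four elements. -/
theorem jacobson_radical_eq_J :
    ((⊥ : Ideal Rring).jacobson : Set Rring) = Jset ∧ Jset.ncard = 4 := by
  constructor
  · ext x
    constructor
    · intro hmem
      have h : x ∈ (⊥ : Ideal Rring).jacobson := hmem
      obtain ⟨z, hz⟩ := Ideal.mem_jacobson_iff.mp h 1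
      rw [Ideal.mem_bot, mul_one, sub_eq_zero] at hz
      -- hz : z * x + z = 1
      obtain ⟨a, b, c, d, hx⟩ := x.2
      have hx' : x = mm a b c d := Subtype.ext hx
      have hz' : z * (x + 1) = 1 := by rw [mul_add, mul_one, hz]
      have hz'' : z * mm (a + 1) (b + 1) (c + 0) (d + 0) = 1 := by
        rw [← mm_add, ← mm_one, ← hx']; exact hz'
      have hco : (z : Matrix (Fin 3) (Fin 3) (ZMod 2)) *
          m (a + 1) (b + 1) (c + 0) (d + 0) = 1 := congrArg Subtype.val hz''
      have hdet : ((z : Matrix (Fin 3) (Fin 3) (ZMod 2))).det *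
          (m (a + 1) (b + 1) (c + 0) (d + 0)).det = 1 := by
        rw [← Matrix.det_mul, hco, Matrix.det_one]
      rw [det_m] at hdet
      have key : ∀ (u a b : ZMod 2), u * ((a + 1) * (b + 1) * (b + 1)) = 1 →
          a = 0 ∧ b = 0 := by decide
      have hab := key _ _ _ hdet
      rw [hx', hab.1, hab.2]
      exact ⟨c, d, rfl⟩
    · rintro ⟨c, d, rfl⟩
      show mm 0 0 c d ∈ (⊥ : Ideal Rring).jacobson
      rw [Ideal.mem_jacobson_iff]
      intro y
      obtain ⟨a, b, c', d', hy⟩ := y.2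
      have hy' : y = mm a b c' d' := Subtype.ext hy
      have hyx : y * mm 0 0 c d + 1 = mm 1 1 (a * c) (a * d) := by
        rw [hy', mm_mul, mm_one, mm_add]
        congr 1 <;> ring
      refine ⟨mm 1 1 (a * c) (a * d), ?_⟩
      rw [Ideal.mem_bot, sub_eq_zero]
      have : mm 1 1 (a * c) (a * d) * (y * mm 0 0 c d + 1) = 1 := by
        rw [hyx, mm_mul, mm_one]
        congr 1 <;>
          simp only [one_mul, mul_one, ← two_mul, show (2 : ZMod 2) = 0 from rfl, zero_mul]
      calc mm 1 1 (a * c) (a * d) * y * mm 0 0 c d + mm 1 1 (a * c) (a * d)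
          = mm 1 1 (a * c) (a * d) * (y * mm 0 0 c d + 1) := by
            rw [mul_add, mul_one, ← mul_assoc]
        _ = 1 := this
  · have hJ : Jset = (fun p : ZMod 2 × ZMod 2 => mm 0 0 p.1 p.2) '' Set.univ := by
      ext x
      simp only [Jset, Set.mem_setOf_eq, Set.image_univ, Set.mem_range, Prod.exists]
      constructor
      · rintro ⟨c, d, rfl⟩; exact ⟨c, d, rfl⟩
      · rintro ⟨c, d, rfl⟩; exact ⟨c, d, rfl⟩
    rw [hJ, Set.ncard_image_of_injective _ ?_, Set.ncard_univ]
    · simp [Nat.card_eq_fintype_card]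
    · intro p q hpq
      have h0 := congrArg Subtype.val hpq
      have h1 := congrFun (congrFun h0 0) 1
      have h2 := congrFun (congrFun h0 0) 2
      simp [mm, m] at h1 h2
      exact Prod.ext h1 h2
end

section
/- For each of the nine distinguished generators (x,y), the cyclic left submodule R(x,y) of R² is free, i.e., the map α ↦ (αx, αy) from R to R² is injective; equivalently, each of the nine submodules R(x,y) has exactly 16 elements. -/
open Matrix

/-- The cyclic left submodule R(x,y) = {(αx, αy) : α ∈ R} of R², as a set of vectors. -/
def RM (x y : Rring) : Set (Rring × Rring) := {p | ∃ α : Rring, p = (α * x, α * y)}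

def t : Rring := mm 0 0 1 0
def f : Rring := mm 0 0 1 1
def s : Rring := mm 0 0 0 1
def e : Rring := mm 0 1 0 0
def u : Rring := mm 0 1 1 0
def v : Rring := mm 0 1 1 1
def w : Rring := mm 0 1 0 1

/-- The nine distinguished generators. -/
def gens : List (Rring × Rring) :=
  [(t, e), (f, e), (s, e), (e, u), (e, v), (e, w), (e, s), (e, f), (e, t)]

lemma m_apply (a b c d : ZMod 2) :
    m a b c d 0 0 = a ∧ m a b c d 1 1 = b ∧ m a b c d 0 1 = c ∧ m a b c d 0 2 = d := by
  refine ⟨?_, ?_, ?_, ?_⟩ <;> simp [m]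

lemma mm_inj {a b c d a' b' c' d' : ZMod 2} (h : mm a b c d = mm a' b' c' d') :
    a = a' ∧ b = b' ∧ c = c' ∧ d = d' := by
  have hv : m a b c d = m a' b' c' d' := congrArg Subtype.val h
  obtain ⟨p1, p2, p3, p4⟩ := m_apply a b c d
  obtain ⟨q1, q2, q3, q4⟩ := m_apply a' b' c' d'
  refine ⟨?_, ?_, ?_, ?_⟩
  · rw [← p1, ← q1, hv]
  · rw [← p2, ← q2, hv]
  · rw [← p3, ← q3, hv]
  · rw [← p4, ← q4, hv]

lemma mm_ext {a b c d a' b' c' d' : ZMod 2} (h1 : a = a') (h2 : b = b')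
    (h3 : c = c') (h4 : d = d') : mm a b c d = mm a' b' c' d' := by
  subst h1 h2 h3 h4; rfl

lemma exists_mm (α : Rring) : ∃ a b c d : ZMod 2, α = mm a b c d := by
  obtain ⟨A, a, b, c, d, rfl⟩ := α
  exact ⟨a, b, c, d, rfl⟩

noncomputable def RringEquiv : Rring ≃ (ZMod 2 × ZMod 2 × ZMod 2 × ZMod 2) where
  toFun α := (α.1 0 0, α.1 1 1, α.1 0 1, α.1 0 2)
  invFun q := mm q.1 q.2.1 q.2.2.1 q.2.2.2
  left_inv := by
    intro α
    obtain ⟨a, b, c, d, rfl⟩ := exists_mm α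
    obtain ⟨p1, p2, p3, p4⟩ := m_apply a b c d
    simp only [mm, p1, p2, p3, p4]
  right_inv := by
    rintro ⟨a, b, c, d⟩
    obtain ⟨p1, p2, p3, p4⟩ := m_apply a b c d
    simp only [mm, p1, p2, p3, p4]

lemma card_Rring : Nat.card Rring = 16 := by
  rw [Nat.card_congr RringEquiv]
  simp [Nat.card_eq_fintype_card]

/-- For each of the nine distinguished generators (x,y), the cyclic left submodule
R(x,y) is free (the map α ↦ (αx, αy) is injective); equivalently, it has 16 elements. -/
theorem nine_submodules_free :
    ∀ g ∈ gens, Function.Injective (fun α : Rring => (α * g.1, α * g.2)) ∧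
      (RM g.1 g.2).ncard = 16 := by
  have key : ∀ x y : Rring,
      Function.Injective (fun α : Rring => (α * x, α * y)) →
      (RM x y).ncard = 16 := by
    intro x y hinj
    have hr : RM x y = Set.range (fun α : Rring => (α * x, α * y)) := by
      ext p; simp [RM, Set.range, eq_comm]
    rw [hr, ← Nat.card_coe_set_eq, Nat.card_range_of_injective hinj, card_Rring]
  intro g hg
  fin_cases hg <;> refine (fun hi => ⟨hi, key _ _ hi⟩) ?_ <;>
  · intro α β h
    obtain ⟨a, b, c, d, rfl⟩ := exists_mm α
    obtain ⟨a', b', c', d', rfl⟩ := exists_mm β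
    simp only [t, f, s, e, u, v, w, mm_mul, Prod.mk.injEq,
      mul_zero, mul_one, zero_mul, one_mul, add_zero, zero_add] at h
    obtain ⟨h1, h2⟩ := h
    obtain ⟨e1, e2, e3, e4⟩ := mm_inj h1
    obtain ⟨f1, f2, f3, f4⟩ := mm_inj h2
    refine mm_ext ?_ ?_ ?_ ?_ <;>
      first
        | assumption
        | linear_combination e3 - f3
        | linear_combination f3 - e3
        | linear_combination e4 - f4
        | linear_combination f4 - e4
end

section
/- For each of the nine distinguished generators (x,y), the cyclic left submodule R(x,y) contains no unimodular vector; in particular each generator (x,y) itself is not unimodular. -/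
open Matrix

lemma entry00 (A B : Rring) : (A * B : Rring).val 0 0 = A.val 0 0 * B.val 0 0 := by
  obtain ⟨a, b, c, d, hA⟩ := A.2
  obtain ⟨a', b', c', d', hB⟩ := B.2
  have : (A * B : Rring).val = A.val * B.val := rfl
  rw [this, hA, hB, m_mul]
  simp [m]

lemma one00 : (1 : Rring).val 0 0 = 1 := by
  simp [Matrix.one_apply]

lemma add00 (A B : Rring) : (A + B : Rring).val 0 0 = A.val 0 0 + B.val 0 0 := rfl

lemma key (x y : Rring) (hx : x.val 0 0 = 0) (hy : y.val 0 0 = 0) :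
    ∀ p ∈ RM x y, ¬ ∃ c d : Rring, p.1 * c + p.2 * d = 1 := by
  rintro p ⟨α, rfl⟩ ⟨c, d, h⟩
  have h0 : ((α * x * c + α * y * d : Rring)).val 0 0 = (1 : Rring).val 0 0 := by rw [h]
  rw [add00, entry00, entry00, entry00, entry00, hx, hy, one00] at h0
  simp at h0

lemma mm00 (a b c d : ZMod 2) : (mm a b c d).val 0 0 = a := by simp [mm, m]

/-- For each of the nine distinguished generators (x,y), the submodule R(x,y) contains
no unimodular vector; in particular the generator (x,y) itself is not unimodular. -/
theorem nine_submodules_nonunimodular :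
    ∀ g ∈ gens, (∀ p ∈ RM g.1 g.2, ¬ ∃ c d : Rring, p.1 * c + p.2 * d = 1) ∧
      ¬ ∃ c d : Rring, g.1 * c + g.2 * d = 1 := by
  intro g hg
  have hz : g.1.val 0 0 = 0 ∧ g.2.val 0 0 = 0 := by
    fin_cases hg <;> simp [t, f, s, e, u, v, w, mm00]
  refine ⟨key g.1 g.2 hz.1 hz.2, ?_⟩
  exact key g.1 g.2 hz.1 hz.2 (g.1, g.2) ⟨1, by simp⟩
end

section
/- The three submodules R(e,t), R(e,f), R(e,s) pairwise intersect in exactly the set I_l × {0}; that is, R(e,t) ∩ R(e,f) = R(e,f) ∩ R(e,s) = R(e,t) ∩ R(e,s) = {(x, 0) : x ∈ I_l}, a set of 8 vectors. -/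
open Matrix

/-- The set I_l = {m(0,b,c,d) : b,c,d ∈ GF(2)}, as a subset of R. -/
def Il : Set Rring := {x | ∃ b c d : ZMod 2, x = mm 0 b c d}

lemma mm_zero : (0 : Rring) = mm 0 0 0 0 := by
  apply Subtype.ext
  show (0 : Matrix (Fin 3) (Fin 3) (ZMod 2)) = m 0 0 0 0
  ext i j
  fin_cases i <;> fin_cases j <;> simp [m, Matrix.vecHead, Matrix.vecTail]

lemma inter_eq (c0 d0 c1 d1 : ZMod 2)
    (h : ∀ a a' : ZMod 2, a * c0 = a' * c1 → a * d0 = a' * d1 → a = 0 ∧ a' = 0) :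
    RM e (mm 0 0 c0 d0) ∩ RM e (mm 0 0 c1 d1) =
      {p : Rring × Rring | ∃ x ∈ Il, p = (x, 0)} := by
  ext p
  constructor
  · rintro ⟨⟨α, rfl⟩, β, hβ⟩
    obtain ⟨a, b, c, d, rfl⟩ := exists_mm α
    obtain ⟨a', b', c', d', rfl⟩ := exists_mm β
    rw [Prod.ext_iff] at hβ
    simp only [e, mm_mul, mul_zero, zero_mul, add_zero, zero_add, mul_one] at hβ ⊢
    obtain ⟨-, -, hc, hd⟩ := mm_inj hβ.2
    obtain ⟨ha, -⟩ := h a a' hc hd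
    refine ⟨mm 0 b c d, ⟨b, c, d, rfl⟩, ?_⟩
    rw [Prod.ext_iff]
    subst ha
    simp [mm_zero]
  · rintro ⟨x, ⟨b, c, d, rfl⟩, rfl⟩
    constructor <;> refine ⟨mm 0 b c d, ?_⟩ <;> rw [Prod.ext_iff] <;>
      simp only [e, mm_mul, mul_zero, zero_mul, add_zero, zero_add, mul_one] <;>
      exact ⟨trivial, mm_zero⟩

lemma key_s10 : {p : Rring × Rring | ∃ x ∈ Il, p = (x, 0)} =
    (fun bcd : ZMod 2 × ZMod 2 × ZMod 2 => ((mm 0 bcd.1 bcd.2.1 bcd.2.2, 0) : Rring × Rring)) ''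
      Set.univ := by
  ext p
  simp only [Set.mem_setOf_eq, Set.image_univ, Set.mem_range, Il, Prod.exists]
  constructor
  · rintro ⟨x, ⟨b, c, d, rfl⟩, rfl⟩; exact ⟨b, c, d, rfl⟩
  · rintro ⟨b, c, d, rfl⟩; exact ⟨mm 0 b c d, ⟨b, c, d, rfl⟩, rfl⟩

/-- The submodules R(e,t), R(e,f), R(e,s) pairwise intersect in exactly the set
I_l × {0}, a set of 8 vectors. -/
theorem pairwise_intersections_third_triple :
    RM e t ∩ RM e f = {p : Rring × Rring | ∃ x ∈ Il, p = (x, 0)} ∧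
    RM e f ∩ RM e s = {p : Rring × Rring | ∃ x ∈ Il, p = (x, 0)} ∧
    RM e t ∩ RM e s = {p : Rring × Rring | ∃ x ∈ Il, p = (x, 0)} ∧
    {p : Rring × Rring | ∃ x ∈ Il, p = (x, 0)}.ncard = 8 := by
  have hinj : Function.Injective
      (fun bcd : ZMod 2 × ZMod 2 × ZMod 2 =>
        ((mm 0 bcd.1 bcd.2.1 bcd.2.2, 0) : Rring × Rring)) := by
    rintro ⟨b, c, d⟩ ⟨b', c', d'⟩ hh
    obtain ⟨-, h1, h2, h3⟩ := mm_inj (congrArg Prod.fst hh)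
    simp_all
  refine ⟨?_, ?_, ?_, ?_⟩
  · simpa only [t, f] using inter_eq 1 0 1 1 (by decide)
  · simpa only [f, s] using inter_eq 1 1 0 1 (by decide)
  · simpa only [t, s] using inter_eq 1 0 0 1 (by decide)
  · rw [key_s10, Set.ncard_image_of_injective _ hinj, Set.ncard_univ]
    simp [Nat.card_eq_fintype_card]
end

section
/- Partition the nine distinguished submodules into the three triples T1 = {R(t,e), R(f,e), R(s,e)}, T2 = {R(e,u), R(e,v), R(e,w)}, T3 = {R(e,t), R(e,f), R(e,s)}. Then any two submodules belonging to different triples intersect in exactly 4 vectors, while any two distinct submodules belonging to the same triple intersect in exactly 8 vectors. -/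
open Matrix

/-- The first triple of distinguished generators. -/
def T1 : List (Rring × Rring) := [(t, e), (f, e), (s, e)]
/-- The second triple of distinguished generators. -/
def T2 : List (Rring × Rring) := [(e, u), (e, v), (e, w)]
/-- The third triple of distinguished generators. -/
def T3 : List (Rring × Rring) := [(e, t), (e, f), (e, s)]


instance Rring.instFintype : Fintype Rring :=
  ⟨(Finset.univ : Finset (ZMod 2 × ZMod 2 × ZMod 2 × ZMod 2)).image
      (fun q => mm q.1 q.2.1 q.2.2.1 q.2.2.2) |>.map (Function.Embedding.refl _), by
    rintro ⟨A, a, b, c, d, rfl⟩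
    simp only [Finset.mem_map, Finset.mem_image, Function.Embedding.refl_apply]
    exact ⟨mm a b c d, ⟨(a, b, c, d), Finset.mem_univ _, rfl⟩, rfl⟩⟩

instance RM.decidablePred (x y : Rring) : DecidablePred (· ∈ RM x y) := fun p =>
  decidable_of_iff (∃ α : Rring, p = (α * x, α * y)) Iff.rfl

set_option maxHeartbeats 8000000 in
set_option maxRecDepth 100000 in
/-- Any two distinguished submodules belonging to different triples intersect in exactly
4 vectors, while any two distinct distinguished submodules belonging to the same triple
intersect in exactly 8 vectors. -/
theorem intersection_cardinalities :
    (∀ g ∈ T1, ∀ h ∈ T2, (RM g.1 g.2 ∩ RM h.1 h.2).ncard = 4) ∧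
    (∀ g ∈ T1, ∀ h ∈ T3, (RM g.1 g.2 ∩ RM h.1 h.2).ncard = 4) ∧
    (∀ g ∈ T2, ∀ h ∈ T3, (RM g.1 g.2 ∩ RM h.1 h.2).ncard = 4) ∧
    (∀ g ∈ T1, ∀ h ∈ T1, RM g.1 g.2 ≠ RM h.1 h.2 → (RM g.1 g.2 ∩ RM h.1 h.2).ncard = 8) ∧
    (∀ g ∈ T2, ∀ h ∈ T2, RM g.1 g.2 ≠ RM h.1 h.2 → (RM g.1 g.2 ∩ RM h.1 h.2).ncard = 8) ∧
    (∀ g ∈ T3, ∀ h ∈ T3, RM g.1 g.2 ≠ RM h.1 h.2 → (RM g.1 g.2 ∩ RM h.1 h.2).ncard = 8) := by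
  refine ⟨?_, ?_, ?_, ?_, ?_, ?_⟩ <;>
    intro g hg h hh <;>
    fin_cases hg <;> fin_cases hh <;>
    first
      | (intro hne; exact absurd rfl hne)
      | (try intro hne
         rw [Set.ncard_eq_toFinset_card']
         decide)
end

section
/- Exactly six of the 15 synthemes L have the property that the β-image of L is contained in three of the nine distinguished submodules R(x,y), and each of the remaining nine synthemes has its β-image contained in exactly one of the nine submodules. -/
open Matrix

/-- A duad: a 2-element subset of the 6-element set. -/
def IsDuad (p : Finset (Fin 6)) : Prop := p.card = 2

/-- A syntheme: a set of three duads partitioning the 6-element set. -/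
def IsSyntheme (L : Finset (Finset (Fin 6))) : Prop :=
  L.card = 3 ∧ (∀ p ∈ L, IsDuad p) ∧ ∀ i : Fin 6, ∃! p, p ∈ L ∧ i ∈ p

/-- The bijection β from the 15 duads (2-subsets of Fin 6, with 0,…,5 standing for
1,…,6) to the 15 nonzero vectors of J × J. -/
def β (p : Finset (Fin 6)) : Rring × Rring :=
  if p = {0, 1} then (t, t)
  else if p = {0, 2} then (f, t)
  else if p = {0, 3} then (0, s)
  else if p = {0, 4} then (t, s)
  else if p = {0, 5} then (f, 0)
  else if p = {1, 2} then (s, 0)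
  else if p = {1, 3} then (t, f)
  else if p = {1, 4} then (0, f)
  else if p = {1, 5} then (s, t)
  else if p = {2, 3} then (f, f)
  else if p = {2, 4} then (s, f)
  else if p = {2, 5} then (0, t)
  else if p = {3, 4} then (t, 0)
  else if p = {3, 5} then (f, s)
  else if p = {4, 5} then (s, s)
  else 0

/-- D(x,y): the set of duads whose β-image lies in the submodule R(x,y). -/
def Dset (x y : Rring) : Set (Finset (Fin 6)) := {p | IsDuad p ∧ β p ∈ RM x y}

/-- The number of the nine distinguished submodules containing the β-image of the
syntheme L. -/
noncomputable def Ncount (L : Finset (Finset (Fin 6))) : ℕ :=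
  {M : Set (Rring × Rring) | (∃ g ∈ gens, M = RM g.1 g.2) ∧ ∀ q ∈ L, β q ∈ M}.ncard


section Aux

set_option maxRecDepth 8000

instance Rring.decMem : DecidablePred (· ∈ Rring) := fun A =>
  decidable_of_iff (∃ a b c d : ZMod 2, A = m a b c d) Iff.rfl

def RL : List Rring :=
  [mm 0 0 0 0, mm 0 0 0 1, mm 0 0 1 0, mm 0 0 1 1,
   mm 0 1 0 0, mm 0 1 0 1, mm 0 1 1 0, mm 0 1 1 1,
   mm 1 0 0 0, mm 1 0 0 1, mm 1 0 1 0, mm 1 0 1 1,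
   mm 1 1 0 0, mm 1 1 0 1, mm 1 1 1 0, mm 1 1 1 1]

instance Rring.fintype : Fintype Rring := by
  apply Fintype.ofList RL
  rintro ⟨A, a, b, c, d, rfl⟩
  have h : ∀ a b c d : ZMod 2, mm a b c d ∈ RL := by decide
  exact h a b c d

instance RM.decMem (x y : Rring) (p : Rring × Rring) : Decidable (p ∈ RM x y) :=
  decidable_of_iff (∃ α : Rring, p = (α * x, α * y)) Iff.rfl

lemma gens_notMem : ∀ g ∈ gens, ∀ g' ∈ gens, g ≠ g' → (g.1, g.2) ∉ RM g'.1 g'.2 := by decide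

def gensF : Finset (Rring × Rring) := gens.toFinset
def L1e : Finset (Finset (Fin 6)) := {{0,1}, {2,3}, {4,5}}
def L2e : Finset (Finset (Fin 6)) := {{0,1}, {2,4}, {3,5}}
def L3e : Finset (Finset (Fin 6)) := {{0,1}, {2,5}, {3,4}}
def L4e : Finset (Finset (Fin 6)) := {{0,2}, {1,3}, {4,5}}
def L5e : Finset (Finset (Fin 6)) := {{0,2}, {1,4}, {3,5}}
def L6e : Finset (Finset (Fin 6)) := {{0,2}, {1,5}, {3,4}}
def L7e : Finset (Finset (Fin 6)) := {{0,3}, {1,2}, {4,5}}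
def L8e : Finset (Finset (Fin 6)) := {{0,3}, {1,4}, {2,5}}
def L9e : Finset (Finset (Fin 6)) := {{0,3}, {1,5}, {2,4}}
def L10e : Finset (Finset (Fin 6)) := {{0,4}, {1,2}, {3,5}}
def L11e : Finset (Finset (Fin 6)) := {{0,4}, {1,3}, {2,5}}
def L12e : Finset (Finset (Fin 6)) := {{0,4}, {1,5}, {2,3}}
def L13e : Finset (Finset (Fin 6)) := {{0,5}, {1,2}, {3,4}}
def L14e : Finset (Finset (Fin 6)) := {{0,5}, {1,3}, {2,4}}
def L15e : Finset (Finset (Fin 6)) := {{0,5}, {1,4}, {2,3}}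

def S15F : Finset (Finset (Finset (Fin 6))) :=
  {L1e, L2e, L3e, L4e, L5e, L6e, L7e, L8e, L9e, L10e, L11e, L12e, L13e, L14e, L15e}

def S3F : Finset (Finset (Finset (Fin 6))) :=
  {L1e, L3e, L7e, L8e, L13e, L15e}

def S9F : Finset (Finset (Finset (Fin 6))) :=
  {L2e, L4e, L5e, L6e, L9e, L10e, L11e, L12e, L14e}

def D15 : List (Finset (Fin 6)) :=
  [{0,1},{0,2},{0,3},{0,4},{0,5},{1,2},{1,3},{1,4},{1,5},{2,3},{2,4},{2,5},{3,4},{3,5},{4,5}]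

lemma syntheme_mem {L : Finset (Finset (Fin 6))} (h : IsSyntheme L) : L ∈ S15F := by
  obtain ⟨h1, h2, h3⟩ := h
  obtain ⟨a, b, c, hab, hac, hbc, rfl⟩ := Finset.card_eq_three.mp h1
  have hD : ∀ p : Finset (Fin 6), p.card = 2 → p ∈ D15 := by decide
  have key : ∀ p ∈ D15, ∀ q ∈ D15, ∀ r ∈ D15,
      (∀ i : Fin 6, i ∈ p ∨ i ∈ q ∨ i ∈ r) →
      ({p,q,r} : Finset (Finset (Fin 6))) ∈ S15F := by decide
  have ha : a ∈ ({a,b,c} : Finset (Finset (Fin 6))) := by simp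
  have hb : b ∈ ({a,b,c} : Finset (Finset (Fin 6))) := by simp
  have hc : c ∈ ({a,b,c} : Finset (Finset (Fin 6))) := by simp
  refine key a (hD a (h2 a ha)) b (hD b (h2 b hb)) c (hD c (h2 c hc)) fun i => ?_
  obtain ⟨p, ⟨hp, hip⟩, -⟩ := h3 i
  simp only [Finset.mem_insert, Finset.mem_singleton] at hp
  rcases hp with rfl | rfl | rfl
  · exact Or.inl hip
  · exact Or.inr (Or.inl hip)
  · exact Or.inr (Or.inr hip)

lemma isSyntheme_of (L : Finset (Finset (Fin 6))) (h1 : L.card = 3)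
    (h2 : ∀ p ∈ L, p.card = 2) (h3 : ∀ i : Fin 6, ∃ p ∈ L, i ∈ p)
    (h4 : ∀ p ∈ L, ∀ q ∈ L, p ≠ q → ∀ i : Fin 6, ¬(i ∈ p ∧ i ∈ q)) : IsSyntheme L := by
  refine ⟨h1, h2, fun i => ?_⟩
  obtain ⟨p, hp, hip⟩ := h3 i
  exact ⟨p, ⟨hp, hip⟩, fun q ⟨hq, hiq⟩ => by
    by_contra hne
    exact h4 q hq p hp hne i ⟨hiq, hip⟩⟩

lemma Ncount_eq (L : Finset (Finset (Fin 6))) :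
    Ncount L = (gensF.filter (fun g => ∀ q ∈ L, β q ∈ RM g.1 g.2)).card := by
  have hinj : Set.InjOn (fun g : Rring × Rring => RM g.1 g.2)
      {g | g ∈ gens ∧ ∀ q ∈ L, β q ∈ RM g.1 g.2} := by
    rintro g ⟨hg, -⟩ g' ⟨hg', -⟩ h
    by_contra hne
    have h1 : (g.1, g.2) ∈ RM g.1 g.2 := ⟨1, by simp⟩
    rw [show RM g.1 g.2 = RM g'.1 g'.2 from h] at h1
    exact gens_notMem g hg g' hg' hne h1
  have hset : {M : Set (Rring × Rring) | (∃ g ∈ gens, M = RM g.1 g.2) ∧ ∀ q ∈ L, β q ∈ M}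
      = (fun g : Rring × Rring => RM g.1 g.2) '' {g | g ∈ gens ∧ ∀ q ∈ L, β q ∈ RM g.1 g.2} := by
    ext M
    constructor
    · rintro ⟨⟨g, hg, rfl⟩, hP⟩; exact ⟨g, ⟨hg, hP⟩, rfl⟩
    · rintro ⟨g, ⟨hg, hP⟩, rfl⟩; exact ⟨⟨g, hg, rfl⟩, hP⟩
  have hfin : {g : Rring × Rring | g ∈ gens ∧ ∀ q ∈ L, β q ∈ RM g.1 g.2}
      = ↑(gensF.filter (fun g => ∀ q ∈ L, β q ∈ RM g.1 g.2)) := by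
    ext g
    simp [gensF, Finset.mem_filter, List.mem_toFinset]
  rw [Ncount, hset, Set.ncard_image_of_injOn hinj, hfin, Set.ncard_coe_finset]

lemma syn_1 : IsSyntheme L1e :=
  isSyntheme_of _ (by decide) (by decide) (by decide) (by decide)

lemma cnt_1 : (gensF.filter (fun g => ∀ q ∈ L1e, β q ∈ RM g.1 g.2)).card = 3 := by
  decide

lemma syn_2 : IsSyntheme L2e :=
  isSyntheme_of _ (by decide) (by decide) (by decide) (by decide)

lemma cnt_2 : (gensF.filter (fun g => ∀ q ∈ L2e, β q ∈ RM g.1 g.2)).card = 1 := by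
  decide

lemma syn_3 : IsSyntheme L3e :=
  isSyntheme_of _ (by decide) (by decide) (by decide) (by decide)

lemma cnt_3 : (gensF.filter (fun g => ∀ q ∈ L3e, β q ∈ RM g.1 g.2)).card = 3 := by
  decide

lemma syn_4 : IsSyntheme L4e :=
  isSyntheme_of _ (by decide) (by decide) (by decide) (by decide)

lemma cnt_4 : (gensF.filter (fun g => ∀ q ∈ L4e, β q ∈ RM g.1 g.2)).card = 1 := by
  decide

lemma syn_5 : IsSyntheme L5e :=
  isSyntheme_of _ (by decide) (by decide) (by decide) (by decide)

lemma cnt_5 : (gensF.filter (fun g => ∀ q ∈ L5e, β q ∈ RM g.1 g.2)).card = 1 := by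
  decide

lemma syn_6 : IsSyntheme L6e :=
  isSyntheme_of _ (by decide) (by decide) (by decide) (by decide)

lemma cnt_6 : (gensF.filter (fun g => ∀ q ∈ L6e, β q ∈ RM g.1 g.2)).card = 1 := by
  decide

lemma syn_7 : IsSyntheme L7e :=
  isSyntheme_of _ (by decide) (by decide) (by decide) (by decide)

lemma cnt_7 : (gensF.filter (fun g => ∀ q ∈ L7e, β q ∈ RM g.1 g.2)).card = 3 := by
  decide

lemma syn_8 : IsSyntheme L8e :=
  isSyntheme_of _ (by decide) (by decide) (by decide) (by decide)

lemma cnt_8 : (gensF.filter (fun g => ∀ q ∈ L8e, β q ∈ RM g.1 g.2)).card = 3 := by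
  decide

lemma syn_9 : IsSyntheme L9e :=
  isSyntheme_of _ (by decide) (by decide) (by decide) (by decide)

lemma cnt_9 : (gensF.filter (fun g => ∀ q ∈ L9e, β q ∈ RM g.1 g.2)).card = 1 := by
  decide

lemma syn_10 : IsSyntheme L10e :=
  isSyntheme_of _ (by decide) (by decide) (by decide) (by decide)

lemma cnt_10 : (gensF.filter (fun g => ∀ q ∈ L10e, β q ∈ RM g.1 g.2)).card = 1 := by
  decide

lemma syn_11 : IsSyntheme L11e :=
  isSyntheme_of _ (by decide) (by decide) (by decide) (by decide)

lemma cnt_11 : (gensF.filter (fun g => ∀ q ∈ L11e, β q ∈ RM g.1 g.2)).card = 1 := by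
  decide

lemma syn_12 : IsSyntheme L12e :=
  isSyntheme_of _ (by decide) (by decide) (by decide) (by decide)

lemma cnt_12 : (gensF.filter (fun g => ∀ q ∈ L12e, β q ∈ RM g.1 g.2)).card = 1 := by
  decide

lemma syn_13 : IsSyntheme L13e :=
  isSyntheme_of _ (by decide) (by decide) (by decide) (by decide)

lemma cnt_13 : (gensF.filter (fun g => ∀ q ∈ L13e, β q ∈ RM g.1 g.2)).card = 3 := by
  decide

lemma syn_14 : IsSyntheme L14e :=
  isSyntheme_of _ (by decide) (by decide) (by decide) (by decide)

lemma cnt_14 : (gensF.filter (fun g => ∀ q ∈ L14e, β q ∈ RM g.1 g.2)).card = 1 := by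
  decide

lemma syn_15 : IsSyntheme L15e :=
  isSyntheme_of _ (by decide) (by decide) (by decide) (by decide)

lemma cnt_15 : (gensF.filter (fun g => ∀ q ∈ L15e, β q ∈ RM g.1 g.2)).card = 3 := by
  decide

lemma card3 : S3F.card = 6 := by decide
lemma card9 : S9F.card = 9 := by decide
lemma mem3_1 : L1e ∈ S3F := by decide
lemma mem3_3 : L3e ∈ S3F := by decide
lemma mem3_7 : L7e ∈ S3F := by decide
lemma mem3_8 : L8e ∈ S3F := by decide
lemma mem3_13 : L13e ∈ S3F := by decide
lemma mem3_15 : L15e ∈ S3F := by decide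
lemma mem9_2 : L2e ∈ S9F := by decide
lemma mem9_4 : L4e ∈ S9F := by decide
lemma mem9_5 : L5e ∈ S9F := by decide
lemma mem9_6 : L6e ∈ S9F := by decide
lemma mem9_9 : L9e ∈ S9F := by decide
lemma mem9_10 : L10e ∈ S9F := by decide
lemma mem9_11 : L11e ∈ S9F := by decide
lemma mem9_12 : L12e ∈ S9F := by decide
lemma mem9_14 : L14e ∈ S9F := by decide

end Aux

/-- Exactly six of the 15 synthemes have their β-image contained in three of the nine
distinguished submodules; each of the remaining nine synthemes has its β-image contained
in exactly one of the nine submodules. -/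
theorem six_synthemes_in_three_submodules :
    {L | IsSyntheme L ∧ Ncount L = 3}.ncard = 6 ∧
    {L | IsSyntheme L ∧ Ncount L = 1}.ncard = 9 ∧
    (∀ L, IsSyntheme L → Ncount L = 3 ∨ Ncount L = 1) := by
  have hsplit : ∀ L : Finset (Finset (Fin 6)), IsSyntheme L →
      (L ∈ S3F ∧ Ncount L = 3) ∨ (L ∈ S9F ∧ Ncount L = 1) := by
    intro L hL
    have hm := syntheme_mem hL
    simp only [S15F, Finset.mem_insert, Finset.mem_singleton] at hm
    rcases hm with rfl | rfl | rfl | rfl | rfl | rfl | rfl | rfl | rfl | rfl | rfl | rfl | rfl | rfl | rfl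
    · exact Or.inl ⟨mem3_1, by rw [Ncount_eq, cnt_1]⟩
    · exact Or.inr ⟨mem9_2, by rw [Ncount_eq, cnt_2]⟩
    · exact Or.inl ⟨mem3_3, by rw [Ncount_eq, cnt_3]⟩
    · exact Or.inr ⟨mem9_4, by rw [Ncount_eq, cnt_4]⟩
    · exact Or.inr ⟨mem9_5, by rw [Ncount_eq, cnt_5]⟩
    · exact Or.inr ⟨mem9_6, by rw [Ncount_eq, cnt_6]⟩
    · exact Or.inl ⟨mem3_7, by rw [Ncount_eq, cnt_7]⟩
    · exact Or.inl ⟨mem3_8, by rw [Ncount_eq, cnt_8]⟩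
    · exact Or.inr ⟨mem9_9, by rw [Ncount_eq, cnt_9]⟩
    · exact Or.inr ⟨mem9_10, by rw [Ncount_eq, cnt_10]⟩
    · exact Or.inr ⟨mem9_11, by rw [Ncount_eq, cnt_11]⟩
    · exact Or.inr ⟨mem9_12, by rw [Ncount_eq, cnt_12]⟩
    · exact Or.inl ⟨mem3_13, by rw [Ncount_eq, cnt_13]⟩
    · exact Or.inr ⟨mem9_14, by rw [Ncount_eq, cnt_14]⟩
    · exact Or.inl ⟨mem3_15, by rw [Ncount_eq, cnt_15]⟩
  have hA : {L | IsSyntheme L ∧ Ncount L = 3} = ↑S3F := by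
    ext L
    simp only [Set.mem_setOf_eq, Finset.mem_coe]
    constructor
    · rintro ⟨hL, h3⟩
      rcases hsplit L hL with ⟨h, -⟩ | ⟨-, h⟩
      · exact h
      · rw [h] at h3; exact absurd h3 (by norm_num)
    · intro h
      simp only [S3F, Finset.mem_insert, Finset.mem_singleton] at h
      rcases h with rfl | rfl | rfl | rfl | rfl | rfl
      · exact ⟨syn_1, by rw [Ncount_eq, cnt_1]⟩
      · exact ⟨syn_3, by rw [Ncount_eq, cnt_3]⟩
      · exact ⟨syn_7, by rw [Ncount_eq, cnt_7]⟩
      · exact ⟨syn_8, by rw [Ncount_eq, cnt_8]⟩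
      · exact ⟨syn_13, by rw [Ncount_eq, cnt_13]⟩
      · exact ⟨syn_15, by rw [Ncount_eq, cnt_15]⟩
  have hB : {L | IsSyntheme L ∧ Ncount L = 1} = ↑S9F := by
    ext L
    simp only [Set.mem_setOf_eq, Finset.mem_coe]
    constructor
    · rintro ⟨hL, h1⟩
      rcases hsplit L hL with ⟨-, h⟩ | ⟨h, -⟩
      · rw [h] at h1; exact absurd h1 (by norm_num)
      · exact h
    · intro h
      simp only [S9F, Finset.mem_insert, Finset.mem_singleton] at h
      rcases h with rfl | rfl | rfl | rfl | rfl | rfl | rfl | rfl | rfl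
      · exact ⟨syn_2, by rw [Ncount_eq, cnt_2]⟩
      · exact ⟨syn_4, by rw [Ncount_eq, cnt_4]⟩
      · exact ⟨syn_5, by rw [Ncount_eq, cnt_5]⟩
      · exact ⟨syn_6, by rw [Ncount_eq, cnt_6]⟩
      · exact ⟨syn_9, by rw [Ncount_eq, cnt_9]⟩
      · exact ⟨syn_10, by rw [Ncount_eq, cnt_10]⟩
      · exact ⟨syn_11, by rw [Ncount_eq, cnt_11]⟩
      · exact ⟨syn_12, by rw [Ncount_eq, cnt_12]⟩
      · exact ⟨syn_14, by rw [Ncount_eq, cnt_14]⟩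
  refine ⟨?_, ?_, fun L hL => ?_⟩
  · rw [hA, Set.ncard_coe_finset, card3]
  · rw [hB, Set.ncard_coe_finset, card9]
  · rcases hsplit L hL with ⟨-, h⟩ | ⟨-, h⟩
    · exact Or.inl h
    · exact Or.inr h
end

section
/- In the free right R-module R², there are exactly nine free cyclic right submodules (x,y)R containing no unimodular vector, and every vector lying in any of these nine submodules has both of its coordinates in the ideal I_r. -/
open Matrix

/-- The set I_r = {m(a,0,c,d) : a,c,d ∈ GF(2)}, as a subset of R. -/
def Ir : Set Rring := {x | ∃ a c d : ZMod 2, x = mm a 0 c d}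

/-- The cyclic right submodule (x,y)R = {(xα, yα) : α ∈ R} of R², as a set of vectors. -/
def RMr (x y : Rring) : Set (Rring × Rring) := {p | ∃ α : Rring, p = (x * α, y * α)}

namespace Aux

abbrev Q4 := (ZMod 2) × (ZMod 2) × (ZMod 2) × (ZMod 2)

def qmul (p q : Q4) : Q4 :=
  (p.1 * q.1, p.2.1 * q.2.1, p.1 * q.2.2.1 + p.2.2.1 * q.2.1,
    p.1 * q.2.2.2 + p.2.2.2 * q.2.1)

def qadd (p q : Q4) : Q4 :=
  (p.1 + q.1, p.2.1 + q.2.1, p.2.2.1 + q.2.2.1, p.2.2.2 + q.2.2.2)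

def qone : Q4 := (1, 1, 0, 0)
def qzero : Q4 := (0, 0, 0, 0)

def eQ (p : Q4) : Rring := mm p.1 p.2.1 p.2.2.1 p.2.2.2

lemma eQ_inj : Function.Injective eQ := by decide

lemma eQ_surj : Function.Surjective eQ := by
  rintro ⟨A, a, b, c, d, rfl⟩
  exact ⟨(a, b, c, d), rfl⟩

lemma eQ_mul (p q : Q4) : eQ p * eQ q = eQ (qmul p q) :=
  Subtype.ext (m_mul p.1 p.2.1 p.2.2.1 p.2.2.2 q.1 q.2.1 q.2.2.1 q.2.2.2)

lemma eQ_add : ∀ p q : Q4, eQ p + eQ q = eQ (qadd p q) := by decide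

lemma eQ_one : eQ qone = 1 := by decide

lemma qmul_one : ∀ p : Q4, qmul p qone = p := by decide
lemma qmul_zero : ∀ p : Q4, qmul p qzero = qzero := by decide
lemma qmul_add : ∀ p β γ : Q4, qmul p (qadd β γ) = qadd (qmul p β) (qmul p γ) := by decide
lemma qadd_self : ∀ β : Q4, qadd β β = qzero := by decide
lemma eq_of_qadd_eq_zero : ∀ β γ : Q4, qadd β γ = qzero → β = γ := by decide

/-- The "spec" property: freeness plus no unimodular vector, on the quadruple side. -/
def PQ (p q : Q4) : Prop :=
  (∀ β γ : Q4, qmul p β = qmul p γ → qmul q β = qmul q γ → β = γ) ∧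
  (∀ β c d : Q4, qadd (qmul c (qmul p β)) (qmul d (qmul q β)) ≠ qone)

/-- A computationally cheap equivalent of `PQ`. -/
def PQ3 (p q : Q4) : Prop :=
  (∀ β : Q4, qmul p β = qzero → qmul q β = qzero → β = qzero) ∧
  (∀ β : Q4, ¬ (((qmul p β).1 = 1 ∨ (qmul q β).1 = 1) ∧
      ((qmul p β).2.1 = 1 ∨ (qmul q β).2.1 = 1)))

instance (p q : Q4) : Decidable (PQ3 p q) := by
  unfold PQ3
  exact @instDecidableAnd _ _ inferInstance inferInstance

def cw (x y : Q4) : Q4 :=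
  if x.1 = 1 then (if x.2.1 = 1 then x else (1,0,0,0))
  else (if y.2.1 = 1 then qzero else (0,1,y.2.2.1,y.2.2.2))

def dw (x y : Q4) : Q4 :=
  if x.1 = 1 then (if x.2.1 = 1 then qzero else (0,1,x.2.2.1,x.2.2.2))
  else (if y.2.1 = 1 then y else (1,0,0,0))

lemma uni_exp : ∀ x y : Q4, ((x.1 = 1 ∨ y.1 = 1) ∧ (x.2.1 = 1 ∨ y.2.1 = 1)) →
    qadd (qmul (cw x y) x) (qmul (dw x y) y) = qone := by decide

lemma zmod2_eq_zero : ∀ a : ZMod 2, a ≠ 1 → a = 0 := by decide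

lemma uni_iff (x y : Q4) : (∃ c d : Q4, qadd (qmul c x) (qmul d y) = qone) ↔
    ((x.1 = 1 ∨ y.1 = 1) ∧ (x.2.1 = 1 ∨ y.2.1 = 1)) := by
  constructor
  · rintro ⟨c, d, h⟩
    constructor
    · by_contra hne
      push_neg at hne
      have h1 : c.1 * x.1 + d.1 * y.1 = 1 := congrArg Prod.fst h
      rw [zmod2_eq_zero _ hne.1, zmod2_eq_zero _ hne.2] at h1
      simp at h1
    · by_contra hne
      push_neg at hne
      have h1 : c.2.1 * x.2.1 + d.2.1 * y.2.1 = 1 := congrArg (fun z => z.2.1) h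
      rw [zmod2_eq_zero _ hne.1, zmod2_eq_zero _ hne.2] at h1
      simp at h1
  · intro hcon
    exact ⟨cw x y, dw x y, uni_exp x y hcon⟩

lemma PQ_iff_PQ3 (p q : Q4) : PQ p q ↔ PQ3 p q := by
  unfold PQ PQ3
  constructor
  · rintro ⟨h1, h2⟩
    refine ⟨fun β hb hb' => h1 β qzero (by rw [hb, qmul_zero]) (by rw [hb', qmul_zero]), ?_⟩
    intro β hcon
    obtain ⟨c, d, hcd⟩ := (uni_iff (qmul p β) (qmul q β)).mpr hcon
    exact h2 β c d hcd
  · rintro ⟨h1, h2⟩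
    constructor
    · intro β γ hb hb'
      apply eq_of_qadd_eq_zero
      apply h1
      · rw [qmul_add, hb, qadd_self]
      · rw [qmul_add, hb', qadd_self]
    · intro β c d hcd
      exact h2 β ((uni_iff (qmul p β) (qmul q β)).mp ⟨c, d, hcd⟩)

lemma mem_RMr (p q : Q4) (z : Rring × Rring) :
    z ∈ RMr (eQ p) (eQ q) ↔ ∃ β : Q4, z = (eQ (qmul p β), eQ (qmul q β)) := by
  constructor
  · rintro ⟨α, rfl⟩
    obtain ⟨β, rfl⟩ := eQ_surj α
    exact ⟨β, by rw [eQ_mul, eQ_mul]⟩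
  · rintro ⟨β, rfl⟩
    exact ⟨eQ β, by rw [eQ_mul, eQ_mul]⟩

lemma unimod_iff (a b : Q4) :
    (∃ c d : Rring, c * eQ a + d * eQ b = 1) ↔
      ∃ c d : Q4, qadd (qmul c a) (qmul d b) = qone := by
  constructor
  · rintro ⟨c, d, h⟩
    obtain ⟨c', rfl⟩ := eQ_surj c
    obtain ⟨d', rfl⟩ := eQ_surj d
    rw [eQ_mul, eQ_mul, eQ_add, ← eQ_one] at h
    exact ⟨c', d', eQ_inj h⟩
  · rintro ⟨c, d, h⟩
    exact ⟨eQ c, eQ d, by rw [eQ_mul, eQ_mul, eQ_add, h, eQ_one]⟩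

lemma transfer (p q : Q4) :
    (Function.Injective (fun α : Rring => (eQ p * α, eQ q * α)) ∧
      ∀ z ∈ RMr (eQ p) (eQ q), ¬ ∃ c d : Rring, c * z.1 + d * z.2 = 1) ↔ PQ p q := by
  constructor
  · rintro ⟨hinj, hnu⟩
    constructor
    · intro β γ h1 h2
      apply eQ_inj
      apply hinj (a₁ := eQ β) (a₂ := eQ γ)
      show (eQ p * eQ β, eQ q * eQ β) = (eQ p * eQ γ, eQ q * eQ γ)
      rw [eQ_mul, eQ_mul, eQ_mul, eQ_mul, h1, h2]
    · intro β c d hcd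
      exact hnu (eQ (qmul p β), eQ (qmul q β)) ((mem_RMr p q _).mpr ⟨β, rfl⟩)
        ((unimod_iff _ _).mpr ⟨c, d, hcd⟩)
  · rintro ⟨h1, h2⟩
    constructor
    · intro α α' h
      obtain ⟨β, rfl⟩ := eQ_surj α
      obtain ⟨γ, rfl⟩ := eQ_surj α'
      simp only [eQ_mul] at h
      have hp := congrArg Prod.fst h
      have hq := congrArg Prod.snd h
      exact congrArg eQ (h1 β γ (eQ_inj hp) (eQ_inj hq))
    · intro z hz hcon
      obtain ⟨β, rfl⟩ := (mem_RMr p q z).mp hz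
      obtain ⟨c, d, hcd⟩ := (unimod_iff _ _).mp hcon
      exact h2 β c d hcd

def gQ : Fin 9 → Q4 × Q4 :=
  ![((0,0,0,1),(1,0,0,0)), ((0,0,1,0),(1,0,0,0)), ((0,0,1,1),(1,0,0,0)),
    ((1,0,0,0),(0,0,0,1)), ((1,0,0,0),(0,0,1,0)), ((1,0,0,0),(0,0,1,1)),
    ((1,0,0,0),(1,0,0,1)), ((1,0,0,0),(1,0,1,0)), ((1,0,0,0),(1,0,1,1))]

def F (i : Fin 9) : Set (Rring × Rring) := RMr (eQ (gQ i).1) (eQ (gQ i).2)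

def SE2 (p q p' q' : Q4) : Prop :=
  (∃ γ, qmul p γ = p' ∧ qmul q γ = q') ∧ (∃ γ, qmul p' γ = p ∧ qmul q' γ = q)

instance (p q p' q' : Q4) : Decidable (SE2 p q p' q') := by
  unfold SE2
  exact @instDecidableAnd _ _ inferInstance inferInstance

lemma gens_PQ : ∀ i : Fin 9, PQ3 (gQ i).1 (gQ i).2 := by decide

lemma main_classify : ∀ p q : Q4, PQ3 p q → ∃ i : Fin 9, SE2 p q (gQ i).1 (gQ i).2 := by decide

lemma gens_distinct : ∀ i j : Fin 9, i ≠ j →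
    ∀ β : Q4, ¬ (qmul (gQ j).1 β = (gQ i).1 ∧ qmul (gQ j).2 β = (gQ i).2) := by decide

lemma part2Q : ∀ p q : Q4, PQ3 p q →
    ∀ β : Q4, (qmul p β).2.1 = 0 ∧ (qmul q β).2.1 = 0 := by decide

lemma SE2_to_eq {p q p' q' : Q4} (h : SE2 p q p' q') :
    RMr (eQ p) (eQ q) = RMr (eQ p') (eQ q') := by
  obtain ⟨⟨g, hg1, hg2⟩, ⟨k, hk1, hk2⟩⟩ := h
  ext z
  constructor
  · rintro ⟨α, rfl⟩
    exact ⟨eQ k * α, by rw [← mul_assoc, ← mul_assoc, eQ_mul, eQ_mul, hk1, hk2]⟩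
  · rintro ⟨α, rfl⟩
    exact ⟨eQ g * α, by rw [← mul_assoc, ← mul_assoc, eQ_mul, eQ_mul, hg1, hg2]⟩

lemma F_inj : Function.Injective F := by
  intro i j h
  by_contra hne
  have hmem : (eQ (gQ i).1, eQ (gQ i).2) ∈ F i :=
    (mem_RMr _ _ _).mpr ⟨qone, by rw [qmul_one, qmul_one]⟩
  rw [h] at hmem
  obtain ⟨β, hβ⟩ := (mem_RMr _ _ _).mp hmem
  have h1 := eQ_inj (congrArg Prod.fst hβ)
  have h2 := eQ_inj (congrArg Prod.snd hβ)
  exact gens_distinct i j hne β ⟨h1.symm, h2.symm⟩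

lemma mem_Ir (r : Q4) (h : r.2.1 = 0) : eQ r ∈ Ir := by
  obtain ⟨a, b, c, d⟩ := r
  simp only at h
  subst h
  exact ⟨a, c, d, rfl⟩

end Aux

/-- In the free right R-module R² there are exactly nine free cyclic right submodules
containing no unimodular vector, and every vector lying in any of them has both
coordinates in the ideal I_r. -/
theorem right_module_nonunimodular :
    {M : Set (Rring × Rring) | ∃ x y : Rring, M = RMr x y ∧
      Function.Injective (fun α : Rring => (x * α, y * α)) ∧
      ∀ p ∈ M, ¬ ∃ c d : Rring, c * p.1 + d * p.2 = 1}.ncard = 9 ∧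
    (∀ x y : Rring, Function.Injective (fun α : Rring => (x * α, y * α)) →
      (∀ p ∈ RMr x y, ¬ ∃ c d : Rring, c * p.1 + d * p.2 = 1) →
      RMr x y ⊆ Ir ×ˢ Ir) := by
  constructor
  · have hset : {M : Set (Rring × Rring) | ∃ x y : Rring, M = RMr x y ∧
        Function.Injective (fun α : Rring => (x * α, y * α)) ∧
        ∀ p ∈ M, ¬ ∃ c d : Rring, c * p.1 + d * p.2 = 1} = Set.range Aux.F := by
      ext M
      constructor
      · rintro ⟨x, y, rfl, hinj, hnu⟩
        obtain ⟨p, rfl⟩ := Aux.eQ_surj x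
        obtain ⟨q, rfl⟩ := Aux.eQ_surj y
        obtain ⟨i, hi⟩ := Aux.main_classify p q
          ((Aux.PQ_iff_PQ3 p q).mp ((Aux.transfer p q).mp ⟨hinj, hnu⟩))
        exact ⟨i, (Aux.SE2_to_eq hi).symm⟩
      · rintro ⟨i, rfl⟩
        obtain ⟨h1, h2⟩ := (Aux.transfer (Aux.gQ i).1 (Aux.gQ i).2).mpr
          ((Aux.PQ_iff_PQ3 _ _).mpr (Aux.gens_PQ i))
        exact ⟨Aux.eQ (Aux.gQ i).1, Aux.eQ (Aux.gQ i).2, rfl, h1, h2⟩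
    rw [hset, ← Set.image_univ, Set.ncard_image_of_injective _ Aux.F_inj, Set.ncard_univ]
    simp
  · intro x y hinj hnu
    obtain ⟨p, rfl⟩ := Aux.eQ_surj x
    obtain ⟨q, rfl⟩ := Aux.eQ_surj y
    have hPQ := (Aux.PQ_iff_PQ3 p q).mp ((Aux.transfer p q).mp ⟨hinj, hnu⟩)
    intro z hz
    obtain ⟨β, rfl⟩ := (Aux.mem_RMr p q z).mp hz
    obtain ⟨ha, hb⟩ := Aux.part2Q p q hPQ β
    exact Set.mem_prod.mpr ⟨Aux.mem_Ir _ ha, Aux.mem_Ir _ hb⟩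
end
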